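/- Fix e ≥ 2 and a partition λ of n, and let r be at least the number of parts of λ. Starting from the β-set B_r(λ), perform upward bead moves (each replacing an element b ≥ e by b − e when b − e is absent) until no further move is possible. Then: the terminal β-set does not depend on the order in which the moves are performed; every maximal sequence of moves has the same length w (the e-weight of λ); the partition determined by the terminal β-set (the e-core of λ) does not depend on the choice of r; and n equals the size of the e-core plus w·e. -/

import Mathlib

/-- A partition, recorded by its (1-indexed) sequence of parts: weakly decreasing from
index `1` on, eventually zero, with the unused index `0` set to `0`. -/
structure Ptn where
  parts : ℕ → ℕ
  zero_at_zero : parts 0 = 0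
  antitone : ∀ ⦃i j : ℕ⦄, 1 ≤ i → i ≤ j → parts j ≤ parts i
  eventually_zero : ∃ N : ℕ, ∀ i : ℕ, N ≤ i → parts i = 0

namespace Ptn

/-- The number of (nonzero) parts. -/
noncomputable def numParts (l : Ptn) : ℕ :=
  sInf {N : ℕ | ∀ i : ℕ, N < i → l.parts i = 0}

/-- The size `|λ|`, i.e. the integer that `λ` is a partition of. -/
noncomputable def size (l : Ptn) : ℕ :=
  ∑ i ∈ Finset.Icc 1 l.numParts, l.parts i

/-- The β-set `B_r(λ) = {λ_i + r - i : 1 ≤ i ≤ r}` of `λ` with `r` beads. -/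
def betaSet (l : Ptn) (r : ℕ) : Finset ℕ :=
  (Finset.Icc 1 r).image fun i => l.parts i + r - i

end Ptn

/-- The β-set of the `e`-core: push all beads on each runner as high as possible. -/
def coreBeta (e : ℕ) (B : Finset ℕ) : Finset ℕ :=
  (Finset.range e).biUnion fun k =>
    (Finset.range ((B.filter fun x => x % e = k).card)).image fun j => j * e + k

/-- The `e`-weight of the abacus display `B`. -/
def eWeight (e : ℕ) (B : Finset ℕ) : ℕ :=
  ((∑ b ∈ B, b) - ∑ b ∈ coreBeta e B, b) / e

/-- Two partitions have the same `e`-core. -/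
def SameCore (e : ℕ) (l m : Ptn) : Prop :=
  ∀ r : ℕ, l.numParts ≤ r → m.numParts ≤ r →
    coreBeta e (l.betaSet r) = coreBeta e (m.betaSet r)

/-- `λ` is `e`-regular: it has no `e` equal nonzero parts. -/
def Regular (e : ℕ) (l : Ptn) : Prop :=
  ∀ i : ℕ, 1 ≤ i → l.parts i ≠ 0 → l.parts (i + e - 1) < l.parts i

/-- The sign (if any) contributed by row `x` to the `k`-signature of the display `B`:
`some false` is a `−` (bead on runner `k`, none on runner `k-1`),
`some true` is a `+` (bead on runner `k-1`, none on runner `k`). -/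
def signAt (e k : ℕ) (B : Finset ℕ) (x : ℕ) : Option Bool :=
  if x * e + k ∈ B ∧ x * e + (k - 1) ∉ B then some false
  else if x * e + (k - 1) ∈ B ∧ x * e + k ∉ B then some true
  else none

/-- The `k`-signature of the display `B`, reading rows from top to bottom. -/
def signature (e k : ℕ) (B : Finset ℕ) : List Bool :=
  (List.range (B.sup id / e + 1)).filterMap (signAt e k B)

/-- Successively delete adjacent `−+` pairs until none remain. -/
def reduceSig : List Bool → List Bool
  | [] => []
  | s :: rest =>
    match reduceSig rest with
    | [] => [s]
    | t :: rest' => if s = false ∧ t = true then rest' else s :: t :: rest'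

/-- The number of `−` signs in the reduced `k`-signature of `B`,
i.e. the number of normal beads on runner `k`. -/
def normalCount (e k : ℕ) (B : Finset ℕ) : ℕ :=
  (reduceSig (signature e k B)).count false

/-- The abacus display with `e` runners whose beads on runner `k` sit in the rows `rows k`. -/
def runnerBeta (e : ℕ) (rows : ℕ → Finset ℕ) : Finset ℕ :=
  (Finset.range e).biUnion fun k => (rows k).image fun y => y * e + k

/-- Rows of a 5-bead runner carrying the empty partition. -/
def rowsEmpty : Finset ℕ := {0, 1, 2, 3, 4}
/-- Rows of a 5-bead runner carrying the partition `(3,2)`. -/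
def rows32 : Finset ℕ := {0, 1, 2, 5, 7}
/-- Rows of a 5-bead runner carrying the partition `(2,2)`. -/
def rows22 : Finset ℕ := {0, 1, 2, 5, 6}
/-- Rows of a 5-bead runner carrying the partition `(1)`. -/
def rows1 : Finset ℕ := {0, 1, 2, 3, 5}
/-- Rows of a 5-bead runner carrying the partition `(5)`. -/
def rows5 : Finset ℕ := {0, 1, 2, 3, 9}
/-- Rows of a 5-bead runner carrying the partition `(4)`. -/
def rows4 : Finset ℕ := {0, 1, 2, 3, 8}

/-- The β-set (with `5e` beads) of `⟨i_{3,2}⟩`. -/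
def shape32 (e i : ℕ) : Finset ℕ :=
  runnerBeta e fun k => if k = i then rows32 else rowsEmpty

/-- The β-set (with `5e` beads) of `⟨i_{2²}, j⟩`. -/
def shapeA (e i j : ℕ) : Finset ℕ :=
  runnerBeta e fun k => if k = i then rows22 else if k = j then rows1 else rowsEmpty

/-- The β-set (with `5e` beads) of `⟨j, i_{2²}⟩`. -/
def shapeB (e j i : ℕ) : Finset ℕ :=
  runnerBeta e fun k => if k = j then rows1 else if k = i then rows22 else rowsEmpty

/-- The β-set (with `5e` beads) of `⟨i_5⟩`. -/
def shape5 (e i : ℕ) : Finset ℕ :=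
  runnerBeta e fun k => if k = i then rows5 else rowsEmpty

/-- The β-set (with `5e` beads) of `⟨i_4, i+1⟩`. -/
def shape41 (e i : ℕ) : Finset ℕ :=
  runnerBeta e fun k => if k = i then rows4 else if k = i + 1 then rows1 else rowsEmpty

/-- The β-set (with `5e` beads) of `⟨0, i_4⟩`. -/
def shape04 (e i : ℕ) : Finset ℕ :=
  runnerBeta e fun k => if k = 0 then rows1 else if k = i then rows4 else rowsEmpty

/-- The `e`-weight of the bead at position `a` of the display `B`. -/
def beadWt (e : ℕ) (B : Finset ℕ) (a : ℕ) : ℕ :=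
  ((Finset.Icc 1 (a / e)).filter fun j => a - j * e ∉ B).card

/-- The induced `e`-sequence of the display `B`, as a multiset:
each bead of positive weight `w` at position `a` contributes `a, a-e, …, a-(w-1)e`. -/
def indSeq (e : ℕ) (B : Finset ℕ) : Multiset ℕ :=
  B.val.bind fun a => (Multiset.range (beadWt e B a)).map fun u => a - u * e

/-- The product order `λ ≤_P μ`. -/
def ProdLE (e : ℕ) (l m : Ptn) : Prop :=
  l.size = m.size ∧ SameCore e l m ∧
  (∀ r : ℕ, l.numParts ≤ r → m.numParts ≤ r →
    eWeight e (l.betaSet r) = eWeight e (m.betaSet r)) ∧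
  ∃ N₀ : ℕ, ∀ N : ℕ, N₀ ≤ N → l.numParts ≤ N → m.numParts ≤ N →
    List.Forall₂ (· ≤ ·) (Multiset.sort (indSeq e (l.betaSet N)) (· ≤ ·))
      (Multiset.sort (indSeq e (m.betaSet N)) (· ≤ ·))

/-- The dominance order `λ ⊴ μ`. -/
def Dom (l m : Ptn) : Prop :=
  ∀ t : ℕ, ∑ i ∈ Finset.Icc 1 t, l.parts i ≤ ∑ i ∈ Finset.Icc 1 t, m.parts i

/-- `λ →^σ τ` on displays with `k` beads. -/
def JStep (e k : ℕ) (l τ : Ptn) : Prop :=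
  l.numParts ≤ k ∧ τ.numParts ≤ k ∧
  ∃ (σ : Finset ℕ) (a b i : ℕ), 1 ≤ i ∧ a < b ∧
    a ∈ l.betaSet k ∧ i * e ≤ a ∧ a - i * e ∉ l.betaSet k ∧
    σ = insert (a - i * e) ((l.betaSet k).erase a) ∧
    i * e ≤ b ∧ b - i * e ∈ σ ∧ b ∉ σ ∧
    τ.betaSet k = insert b (σ.erase (b - i * e))

/-- `λ → τ`: `λ →^σ τ` for some `σ` (on some common number of beads). -/
def JRel (e : ℕ) (l τ : Ptn) : Prop := ∃ k : ℕ, JStep e k l τ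

/-- The Jantzen order `≤_J`: reflexive-transitive closure of `→`. -/
def JLE (e : ℕ) : Ptn → Ptn → Prop := Relation.ReflTransGen (JRel e)

/-- One upward bead move on a β-set. -/
def Step (e : ℕ) (B B' : Finset ℕ) : Prop :=
  ∃ b ∈ B, e ≤ b ∧ b - e ∉ B ∧ B' = insert (b - e) (B.erase b)

/-- No upward bead move is possible. -/
def Terminal (e : ℕ) (B : Finset ℕ) : Prop := ∀ b ∈ B, e ≤ b → b - e ∈ B

/-- `B` is the β-set of `μ` with `r` beads. -/
def IsBetaOf (B : Finset ℕ) (r : ℕ) (μ : Ptn) : Prop :=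
  μ.numParts ≤ r ∧ μ.betaSet r = B

/-- The number of beads of the display `B` on runner `i`. -/
def cnt (e : ℕ) (B : Finset ℕ) (i : ℕ) : ℕ := (B.filter fun x => x % e = i).card

/-- The set of rows of the display `B` occupied by beads on runner `i`. -/
def rowsOf (e : ℕ) (B : Finset ℕ) (i : ℕ) : Finset ℕ :=
  (B.filter fun x => x % e = i).image fun x => x / e

/-- `ν²`: the partition obtained by removing the first part. -/
def Ptn.tail (l : Ptn) : Ptn where
  parts := fun i => if i = 0 then 0 else l.parts (i + 1)
  zero_at_zero := rfl
  antitone := by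
    intro i j hi hij
    try dsimp only
    rw [if_neg (by omega : i ≠ 0), if_neg (by omega : j ≠ 0)]
    exact l.antitone (by omega) (by omega)
  eventually_zero := by
    obtain ⟨N, hN⟩ := l.eventually_zero
    refine ⟨N + 1, fun i hi => ?_⟩
    try dsimp only
    rw [if_neg (by omega : i ≠ 0)]
    exact hN _ (by omega)


----------------- AUX -----------------

lemma Ptn.parts_zero (l : Ptn) {i : ℕ} (hi : l.numParts < i) : l.parts i = 0 := by
  have hne : {N : ℕ | ∀ i : ℕ, N < i → l.parts i = 0}.Nonempty := by
    obtain ⟨N, hN⟩ := l.eventually_zero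
    exact ⟨N, fun i hi => hN i hi.le⟩
  exact Nat.sInf_mem hne i hi

lemma Ptn.beta_strict (l : Ptn) {r i j : ℕ} (hi : 1 ≤ i) (hj : j ≤ r) (hij : i < j) :
    l.parts j + r - j < l.parts i + r - i := by
  have := l.antitone hi hij.le
  omega

lemma Ptn.betaInjOn (l : Ptn) (r : ℕ) : Set.InjOn (fun i => l.parts i + r - i) (Finset.Icc 1 r) := by
  intro i hi j hj h
  simp only [Finset.coe_Icc, Set.mem_Icc] at hi hj
  dsimp only at h
  rcases lt_trichotomy i j with h' | h' | h'
  · exact absurd h (l.beta_strict hi.1 hj.2 h').ne'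
  · exact h'
  · exact absurd h (l.beta_strict hj.1 hi.2 h').ne

lemma Ptn.count_below (l : Ptn) {r i : ℕ} (hi : 1 ≤ i) (hir : i ≤ r) :
    ((l.betaSet r).filter fun x => x < l.parts i + r - i).card = r - i := by
  rw [Ptn.betaSet, Finset.filter_image]
  have hfilter : ((Finset.Icc 1 r).filter fun a => l.parts a + r - a < l.parts i + r - i)
      = Finset.Icc (i+1) r := by
    ext j
    simp only [Finset.mem_filter, Finset.mem_Icc]
    constructor
    · rintro ⟨⟨h1, h2⟩, h3⟩
      refine ⟨?_, h2⟩
      by_contra hji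
      rcases lt_trichotomy i j with h' | h' | h'
      · omega
      · subst h'; omega
      · exact absurd h3 (by have := l.beta_strict h1 hir h'; omega)
    · rintro ⟨h1, h2⟩
      exact ⟨⟨by omega, h2⟩, l.beta_strict hi h2 (by omega)⟩
  rw [hfilter, Finset.card_image_of_injOn ((l.betaInjOn r).mono
    (by simp only [Finset.coe_Icc]; exact Set.Icc_subset_Icc (by omega) le_rfl)), Nat.card_Icc]
  omega

lemma count_below_lt {B : Finset ℕ} {x y : ℕ} (hx : x ∈ B) (h' : x < y) :
    (B.filter fun z => z < x).card < (B.filter fun z => z < y).card := by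
  apply Finset.card_lt_card
  refine ⟨fun z hz => ?_, fun hc => ?_⟩
  · simp only [Finset.mem_filter] at hz ⊢
    exact ⟨hz.1, by omega⟩
  · have := hc (Finset.mem_filter.mpr ⟨hx, h'⟩)
    simp only [Finset.mem_filter] at this
    omega

lemma count_below_inj {B : Finset ℕ} {x y : ℕ} (hx : x ∈ B) (hy : y ∈ B)
    (h : (B.filter fun z => z < x).card = (B.filter fun z => z < y).card) : x = y := by
  rcases lt_trichotomy x y with h' | h' | h'
  · have := count_below_lt hx h'
    omega
  · exact h'
  · have := count_below_lt hy h'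
    omega

lemma Ptn.beta_inj {r : ℕ} {μ ν : Ptn} (hμ : μ.numParts ≤ r) (hν : ν.numParts ≤ r)
    (h : μ.betaSet r = ν.betaSet r) : μ = ν := by
  have hp : ∀ i, μ.parts i = ν.parts i := by
    intro i
    rcases Nat.eq_zero_or_pos i with rfl | hi
    · rw [μ.zero_at_zero, ν.zero_at_zero]
    rcases le_or_gt i r with hir | hir
    · have h1 := μ.count_below hi hir
      have h2 := ν.count_below hi hir
      rw [h] at h1
      have hx : μ.parts i + r - i ∈ ν.betaSet r := by
        rw [← h, Ptn.betaSet]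
        exact Finset.mem_image_of_mem _ (by simp [Finset.mem_Icc]; omega)
      have hy : ν.parts i + r - i ∈ ν.betaSet r := by
        rw [Ptn.betaSet]
        exact Finset.mem_image_of_mem _ (by simp [Finset.mem_Icc]; omega)
      have := count_below_inj hx hy (by rw [h1, h2])
      omega
    · rw [μ.parts_zero (by omega), ν.parts_zero (by omega)]
  obtain ⟨p1, z1, a1, e1⟩ := μ
  obtain ⟨p2, z2, a2, e2⟩ := ν
  have : p1 = p2 := funext hp
  subst this
  rfl

----------------- terminal characterization -----------------

lemma dcl_range {S : Finset ℕ} (h : ∀ j, j + 1 ∈ S → j ∈ S) : S = Finset.range S.card := by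
  rcases S.eq_empty_or_nonempty with rfl | hne
  · simp
  have hdown : ∀ d x, x + d ∈ S → x ∈ S := by
    intro d
    induction d with
    | zero => intro x hx; simpa using hx
    | succ d ih =>
      intro x hx
      exact ih x (h _ (by rw [show x + d + 1 = x + (d+1) by omega]; exact hx))
  set M := S.max' hne with hM
  have hall : ∀ y, y ≤ M → y ∈ S := fun y hy =>
    hdown (M - y) y (by rw [show y + (M - y) = M by omega]; exact S.max'_mem hne)
  have hSr : S = Finset.range (M + 1) := by
    ext y
    simp only [Finset.mem_range]
    exact ⟨fun hy => by have := S.le_max' y hy; omega, fun hy => hall y (by omega)⟩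
  rw [hSr, Finset.card_range]

lemma mem_runner_iff {e : ℕ} (he : 0 < e) (C : Finset ℕ) {k : ℕ} (hk : k < e) (j : ℕ) :
    j * e + k ∈ C ↔ j ∈ rowsOf e C k := by
  constructor
  · intro hmem
    refine Finset.mem_image.mpr ⟨j * e + k, Finset.mem_filter.mpr ⟨hmem, ?_⟩, ?_⟩
    · rw [Nat.add_comm, Nat.add_mul_mod_self_right, Nat.mod_eq_of_lt hk]
    · rw [Nat.add_comm, Nat.add_mul_div_right _ _ he, Nat.div_eq_of_lt hk, Nat.zero_add]
  · intro hmem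
    obtain ⟨x, hx, hxj⟩ := Finset.mem_image.mp hmem
    obtain ⟨hxC, hxk⟩ := Finset.mem_filter.mp hx
    subst hxj
    subst hxk
    have hd := Nat.div_add_mod x e
    rw [Nat.mul_comm] at hd
    rwa [hd]

lemma card_rowsOf {e : ℕ} (C : Finset ℕ) (k : ℕ) : (rowsOf e C k).card = cnt e C k := by
  rw [rowsOf, cnt, Finset.card_image_of_injOn]
  intro x hx y hy hxy
  simp only [Finset.coe_filter, Set.mem_setOf_eq] at hx hy
  dsimp only at hxy
  have h1 := Nat.div_add_mod x e
  have h2 := Nat.div_add_mod y e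
  obtain ⟨hxB, hxk⟩ := hx
  obtain ⟨hyB, hyk⟩ := hy
  rw [hxy] at h1
  omega

lemma terminal_rowsOf {e : ℕ} (he : 0 < e) {C : Finset ℕ} (ht : Terminal e C)
    {k : ℕ} (hk : k < e) : rowsOf e C k = Finset.range (cnt e C k) := by
  rw [← card_rowsOf]
  apply dcl_range
  intro j hj
  rw [← mem_runner_iff he C hk] at hj ⊢
  have h1 : (j + 1) * e + k - e = j * e + k := by
    have : (j+1)*e = j*e + e := by ring
    omega
  have h2 : e ≤ (j+1)*e + k := by nlinarith
  have := ht _ hj h2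
  rwa [h1] at this

lemma terminal_coreBeta {e : ℕ} (he : 0 < e) {C : Finset ℕ} (ht : Terminal e C) :
    coreBeta e C = C := by
  ext x
  rw [coreBeta, Finset.mem_biUnion]
  constructor
  · rintro ⟨k, hk, hx⟩
    rw [Finset.mem_range] at hk
    obtain ⟨j, hj, rfl⟩ := Finset.mem_image.mp hx
    rw [Finset.mem_range] at hj
    rw [mem_runner_iff he C hk, terminal_rowsOf he ht hk]
    exact Finset.mem_range.mpr hj
  · intro hx
    have hk : x % e < e := Nat.mod_lt _ he
    have hxe : x / e * e + x % e = x := by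
      have hd := Nat.div_add_mod x e
      rw [Nat.mul_comm] at hd
      omega
    refine ⟨x % e, Finset.mem_range.mpr hk, Finset.mem_image.mpr ⟨x / e, ?_, hxe⟩⟩
    show x / e ∈ Finset.range (cnt e C (x % e))
    rw [← terminal_rowsOf he ht hk, ← mem_runner_iff he C hk, hxe]
    exact hx

lemma coreBeta_congr {e : ℕ} {B B' : Finset ℕ}
    (h : ∀ k, (B.filter fun x => x % e = k).card = (B'.filter fun x => x % e = k).card) :
    coreBeta e B = coreBeta e B' := by
  rw [coreBeta, coreBeta]
  exact Finset.biUnion_congr rfl fun k _ => by rw [h k]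

----------------- steps -----------------

lemma step_cnt {e : ℕ} {B B' : Finset ℕ} (hS : Step e B B') (k : ℕ) :
    (B'.filter fun x => x % e = k).card = (B.filter fun x => x % e = k).card := by
  obtain ⟨b, hb, heb, hnb, rfl⟩ := hS
  have hmod : (b - e) % e = b % e := by
    conv_rhs => rw [show b = (b - e) + e by omega]
    rw [Nat.add_mod_right]
  rw [Finset.filter_insert, Finset.filter_erase]
  by_cases hp : b % e = k
  · rw [if_pos (by rw [hmod]; exact hp)]
    rw [Finset.card_insert_of_notMem (by
      intro hc
      exact hnb (Finset.mem_of_mem_filter _ (Finset.mem_of_mem_erase hc)))]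
    have hbf : b ∈ B.filter fun x => x % e = k := Finset.mem_filter.mpr ⟨hb, hp⟩
    rw [Finset.card_erase_of_mem hbf]
    have : 0 < (B.filter fun x => x % e = k).card := Finset.card_pos.mpr ⟨b, hbf⟩
    omega
  · rw [if_neg (by rw [hmod]; exact hp)]
    rw [Finset.erase_eq_of_notMem (by
      intro hc
      exact hp (Finset.mem_filter.mp hc).2)]

lemma step_coreBeta {e : ℕ} {B B' : Finset ℕ} (hS : Step e B B') :
    coreBeta e B' = coreBeta e B :=
  coreBeta_congr fun k => step_cnt hS k

lemma step_sum {e : ℕ} {B B' : Finset ℕ} (hS : Step e B B') :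
    ∑ x ∈ B, x = (∑ x ∈ B', x) + e := by
  obtain ⟨b, hb, heb, hnb, rfl⟩ := hS
  rw [Finset.sum_insert (fun hc => hnb (Finset.mem_of_mem_erase hc))]
  have h1 : b + ∑ x ∈ B.erase b, x = ∑ x ∈ B, x := Finset.add_sum_erase B (fun x => x) hb
  omega

----------------- chains -----------------

lemma exists_chain_aux {e : ℕ} (he : 0 < e) :
    ∀ n : ℕ, ∀ B : Finset ℕ, (∑ x ∈ B, x) ≤ n →
    ∃ (L : List (Finset ℕ)) (C : Finset ℕ),
      L.Chain' (Step e) ∧ L.head? = some B ∧ L.getLast? = some C ∧ Terminal e C := by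
  intro n
  induction n with
  | zero =>
    intro B hB
    refine ⟨[B], B, List.isChain_singleton B, rfl, rfl, ?_⟩
    intro b hb hbe
    exfalso
    have : b ≤ ∑ x ∈ B, x := Finset.single_le_sum (f := fun x => x) (fun x _ => Nat.zero_le x) hb
    omega
  | succ n ih =>
    intro B hB
    by_cases ht : Terminal e B
    · exact ⟨[B], B, List.isChain_singleton B, rfl, rfl, ht⟩
    · simp only [Terminal, not_forall] at ht
      obtain ⟨b, hb, hbe, hnb⟩ := ht
      set B' := insert (b - e) (B.erase b) with hB'
      have hstep : Step e B B' := ⟨b, hb, hbe, hnb, rfl⟩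
      have hsum := step_sum hstep
      obtain ⟨L, C, hc, hh, hl, htC⟩ := ih B' (by omega)
      match L, hh, hl, hc with
      | A :: L', hh, hl, hc =>
        have hA : A = B' := by simpa using hh
        subst hA
        refine ⟨B :: B' :: L', C, ?_, rfl, ?_, htC⟩
        · show List.IsChain _ _
          rw [List.isChain_cons_cons]
          exact ⟨hstep, hc⟩
        · rw [List.getLast?_cons_cons]
          exact hl

lemma chain_result {e : ℕ} (he : 0 < e) :
    ∀ (L : List (Finset ℕ)) (B : Finset ℕ), L.Chain' (Step e) → L.head? = some B →
    (∀ C : Finset ℕ, L.getLast? = some C → Terminal e C) →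
    L.getLast? = some (coreBeta e B) ∧
      ∑ x ∈ B, x = (∑ x ∈ coreBeta e B, x) + (L.length - 1) * e := by
  intro L
  induction L with
  | nil => intro B _ hh _; simp at hh
  | cons B₀ rest ih =>
    intro B hc hh hlast
    have hB : B = B₀ := by simpa using hh.symm
    subst hB
    match rest, hc with
    | [], _ =>
      have ht := hlast B (by simp)
      simp only [List.getLast?_singleton, List.length_singleton]
      rw [terminal_coreBeta he ht]
      exact ⟨rfl, by omega⟩
    | B₁ :: rest', hc =>
      change List.IsChain _ _ at hc
      rw [List.isChain_cons_cons] at hc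
      obtain ⟨hstep, hc'⟩ := hc
      have hlast' : ∀ C : Finset ℕ, (B₁ :: rest').getLast? = some C → Terminal e C := by
        intro C hC
        exact hlast C (by rw [List.getLast?_cons_cons]; exact hC)
      obtain ⟨h1, h2⟩ := ih B₁ hc' rfl hlast'
      have hcore : coreBeta e B₁ = coreBeta e B := step_coreBeta hstep
      have hsum := step_sum hstep
      rw [hcore] at h1 h2
      constructor
      · rw [List.getLast?_cons_cons]; exact h1
      · simp only [List.length_cons] at h2 ⊢
        rw [show rest'.length + 1 - 1 = rest'.length from by omega] at h2
        rw [show rest'.length + 1 + 1 - 1 = rest'.length + 1 from by omega, Nat.add_mul,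
          Nat.one_mul]
        omega

----------------- shift -----------------

def shiftB (B : Finset ℕ) : Finset ℕ := insert 0 (B.image (· + 1))

lemma Ptn.betaSet_succ (l : Ptn) {s : ℕ} (hs : l.numParts ≤ s) :
    l.betaSet (s + 1) = shiftB (l.betaSet s) := by
  rw [Ptn.betaSet, Ptn.betaSet, shiftB, show Finset.Icc 1 (s+1) = insert (s+1) (Finset.Icc 1 s)
    from by ext x; simp only [Finset.mem_Icc, Finset.mem_insert]; omega]
  rw [Finset.image_insert, l.parts_zero (by omega : l.numParts < s + 1)]
  rw [show (0 : ℕ) + (s+1) - (s+1) = 0 from by omega]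
  congr 1
  rw [Finset.image_image]
  apply Finset.image_congr
  intro i hi
  simp only [Finset.coe_Icc, Set.mem_Icc] at hi
  simp only [Function.comp_apply]
  omega

lemma step_shiftB {e : ℕ} (he : 1 ≤ e) {A A' : Finset ℕ} (h : Step e A A') :
    Step e (shiftB A) (shiftB A') := by
  obtain ⟨b, hb, hbe, hnb, rfl⟩ := h
  refine ⟨b + 1, ?_, by omega, ?_, ?_⟩
  · exact Finset.mem_insert_of_mem (Finset.mem_image_of_mem _ hb)
  · intro hcmem
    rw [show b + 1 - e = (b - e) + 1 from by omega] at hcmem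
    simp only [shiftB, Finset.mem_insert, Finset.mem_image] at hcmem
    rcases hcmem with h0 | ⟨a, ha, hae⟩
    · omega
    · exact hnb (by rwa [show a = b - e from by omega] at ha)
  · rw [show b + 1 - e = (b - e) + 1 from by omega]
    simp only [shiftB]
    rw [Finset.image_insert, Finset.image_erase (fun x y hxy => by simpa using hxy : Function.Injective (· + 1))]
    ext x
    simp only [Finset.mem_insert, Finset.mem_erase, Finset.mem_image]
    constructor
    · rintro (rfl | h)
      · right; refine ⟨by omega, Or.inl rfl⟩
      · rcases h with rfl | ⟨hx1, h⟩
        · left; rfl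
        · right
          refine ⟨hx1, Or.inr h⟩
    · rintro (rfl | ⟨hx1, rfl | h⟩)
      · right; left; rfl
      · left; rfl
      · right; right; exact ⟨hx1, h⟩

lemma terminal_shiftB {e : ℕ} (he : 1 ≤ e) {C : Finset ℕ} (ht : Terminal e C) :
    Terminal e (shiftB C) := by
  intro b hb hbe
  simp only [shiftB, Finset.mem_insert, Finset.mem_image] at hb ⊢
  rcases hb with rfl | ⟨c, hc, rfl⟩
  · omega
  · rcases Nat.lt_or_ge c e with h' | h'
    · left; omega
    · right
      exact ⟨c - e, ht c hc h', by omega⟩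

lemma core_shift {e : ℕ} (he : 1 ≤ e) (l : Ptn) {s : ℕ} (hs : l.numParts ≤ s) :
    coreBeta e (l.betaSet (s + 1)) = shiftB (coreBeta e (l.betaSet s)) := by
  obtain ⟨L, C, hc, hh, hl, htC⟩ := exists_chain_aux (by omega : 0 < e) _ (l.betaSet s) le_rfl
  have hres := chain_result (by omega : 0 < e) L (l.betaSet s) hc hh
    (fun C' hC' => by rw [hl] at hC'; rwa [← Option.some.inj hC'])
  have hCeq : C = coreBeta e (l.betaSet s) := by
    rw [hres.1] at hl
    exact (Option.some.inj hl).symm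
  -- mapped chain
  have hc2 : (L.map shiftB).Chain' (Step e) := by
    show List.IsChain _ _
    rw [List.isChain_map]
    exact hc.imp fun a b h => step_shiftB he h
  have hh2 : (L.map shiftB).head? = some (l.betaSet (s + 1)) := by
    rw [List.head?_map, hh, Option.map_some, l.betaSet_succ hs]
  have hl2 : (L.map shiftB).getLast? = some (shiftB C) := by
    rw [List.getLast?_map, hl, Option.map_some]
  have hres2 := chain_result (by omega : 0 < e) (L.map shiftB) (l.betaSet (s + 1)) hc2 hh2
    (fun C' hC' => by rw [hl2] at hC'; rw [← Option.some.inj hC']; exact terminal_shiftB he htC)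
  rw [hres2.1] at hl2
  rw [Option.some.inj hl2, hCeq]

lemma beta_core_lift {e : ℕ} (he : 1 ≤ e) (l : Ptn) {s : ℕ} (hls : l.numParts ≤ s)
    {μ : Ptn} (hμs : μ.numParts ≤ s) (h : μ.betaSet s = coreBeta e (l.betaSet s)) :
    ∀ d : ℕ, μ.betaSet (s + d) = coreBeta e (l.betaSet (s + d)) := by
  intro d
  induction d with
  | zero => exact h
  | succ d ih =>
    rw [show s + (d + 1) = (s + d) + 1 from rfl]
    rw [μ.betaSet_succ (by omega), ih, ← core_shift he l (by omega : l.numParts ≤ s + d)]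

----------------- sums -----------------

lemma Ptn.sum_betaSet (l : Ptn) {r : ℕ} (hr : l.numParts ≤ r) :
    ∑ x ∈ l.betaSet r, x = l.size + ∑ i ∈ Finset.Icc 1 r, (r - i) := by
  rw [Ptn.betaSet, Finset.sum_image (fun x hx y hy h => l.betaInjOn r (by simpa using hx) (by simpa using hy) h)]
  have h1 : ∀ i ∈ Finset.Icc 1 r, l.parts i + r - i = l.parts i + (r - i) := by
    intro i hi
    simp only [Finset.mem_Icc] at hi
    omega
  rw [Finset.sum_congr rfl h1, Finset.sum_add_distrib]
  congr 1
  rw [Ptn.size]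
  symm
  apply Finset.sum_subset
  · exact Finset.Icc_subset_Icc le_rfl hr
  · intro i hi hni
    simp only [Finset.mem_Icc] at hi hni
    exact l.parts_zero (by omega)

/-- performing upward bead moves from `B_r(λ)` until none is possible, the
terminal β-set is independent of the order of the moves, every maximal sequence of moves
has the same length `w`, the partition determined by the terminal β-set is independent of
`r`, and `n` equals the size of that partition (the `e`-core) plus `w·e`. -/
theorem statement7 (e : ℕ) (he : 2 ≤ e) (n : ℕ) (l : Ptn) (hn : l.size = n)
    (r : ℕ) (hr : l.numParts ≤ r) :
    ∃ (C : Finset ℕ) (w : ℕ),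
      (∃ L : List (Finset ℕ), L.Chain' (Step e) ∧ L.head? = some (l.betaSet r) ∧
          L.getLast? = some C ∧ Terminal e C) ∧
      (∀ L : List (Finset ℕ), L.Chain' (Step e) → L.head? = some (l.betaSet r) →
          (∀ B : Finset ℕ, L.getLast? = some B → Terminal e B) →
          L.getLast? = some C ∧ L.length = w + 1) ∧
      (∀ r' : ℕ, l.numParts ≤ r' → ∀ C' : Finset ℕ,
          (∃ L : List (Finset ℕ), L.Chain' (Step e) ∧ L.head? = some (l.betaSet r') ∧
            L.getLast? = some C' ∧ Terminal e C') →
          ∀ μ ν : Ptn, IsBetaOf C r μ → IsBetaOf C' r' ν → μ = ν) ∧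
      (∀ μ : Ptn, IsBetaOf C r μ → n = μ.size + w * e) := by
  have he0 : 0 < e := by omega
  have he1 : 1 ≤ e := by omega
  obtain ⟨L₀, C₀, hc₀, hh₀, hl₀, ht₀⟩ := exists_chain_aux he0 _ (l.betaSet r) le_rfl
  have hres₀ := chain_result he0 L₀ (l.betaSet r) hc₀ hh₀
    (fun C' hC' => by rw [hl₀] at hC'; rwa [← Option.some.inj hC'])
  have hC0 : C₀ = coreBeta e (l.betaSet r) := Option.some.inj (hl₀.symm.trans hres₀.1)
  refine ⟨coreBeta e (l.betaSet r), L₀.length - 1, ⟨L₀, hc₀, hh₀, hres₀.1, hC0 ▸ ht₀⟩, ?_, ?_, ?_⟩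
  · -- part 2
    intro L hcL hhL hlastL
    have hres := chain_result he0 L (l.betaSet r) hcL hhL hlastL
    refine ⟨hres.1, ?_⟩
    have h1 := hres₀.2
    have h2 := hres.2
    have hlen1 : 1 ≤ L.length := by
      cases L with
      | nil => simp at hhL
      | cons a t => simp
    have hlen0 : 1 ≤ L₀.length := by
      cases L₀ with
      | nil => simp at hh₀
      | cons a t => simp
    have hmul : (L.length - 1) * e = (L₀.length - 1) * e := by omega
    have := Nat.eq_of_mul_eq_mul_right he0 hmul
    omega
  · -- part 3
    intro r' hr' C' hex μ ν hμ hν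
    obtain ⟨L', hc', hh', hl', ht'⟩ := hex
    have hres' := chain_result he0 L' (l.betaSet r') hc' hh'
      (fun C'' hC'' => by rw [hl'] at hC''; rwa [← Option.some.inj hC''])
    have hC' : C' = coreBeta e (l.betaSet r') := Option.some.inj (hl'.symm.trans hres'.1)
    obtain ⟨hμn, hμb⟩ := hμ
    obtain ⟨hνn, hνb⟩ := hν
    rcases le_total r r' with hle | hle
    · refine Ptn.beta_inj (r := r') (le_trans hμn hle) hνn ?_
      rw [hνb, hC']
      rw [show r' = r + (r' - r) from by omega]
      exact beta_core_lift he1 l hr hμn hμb (r' - r)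
    · refine Ptn.beta_inj (r := r) hμn (le_trans hνn hle) ?_
      rw [hμb]
      rw [show r = r' + (r - r') from by omega]
      exact (beta_core_lift he1 l hr' hνn (by rw [hνb, hC']) (r - r')).symm
  · -- part 4
    intro μ hμ
    obtain ⟨hμn, hμb⟩ := hμ
    have hsum1 := l.sum_betaSet hr
    have hsum2 := μ.sum_betaSet hμn
    rw [hμb] at hsum2
    have h2 := hres₀.2
    omega
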